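/- Suppose there exists δ > 0 such that p_i > δ for all i ≥ 1. Then the set E is compact and its complement ℂ \ E is connected. -/

import Mathlib

/-- `rr p n = r_n = p (⌊(n+1)/2⌋ + 1)`. -/
noncomputable def rr (p : ℕ → ℝ) (n : ℕ) : ℝ := p ((n+1)/2 + 1)

/-- `qF p z n = q_{F_n}(z)`. -/
noncomputable def qF (p : ℕ → ℝ) (z : ℂ) : ℕ → ℂ
  | 0 => (z - (1 - (p 1 : ℂ))) / (p 1 : ℂ)
  | 1 => (1 / (p 2 : ℂ)) * (qF p z 0) ^ 2 - (1 / (p 2 : ℂ) - 1)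
  | (n+2) => (1 / (rr p (n+2) : ℂ)) * qF p z (n+1) * qF p z n - (1 / (rr p (n+2) : ℂ) - 1)

/-- The fibered filled Julia set `E = {z : (q_{F_n}(z))ₙ is bounded}`. -/
def Eset (p : ℕ → ℝ) : Set ℂ := {z : ℂ | ∃ C : ℝ, ∀ n : ℕ, ‖qF p z n‖ ≤ C}

open Metric Set Bornology

lemma qF_continuous (p : ℕ → ℝ) : ∀ n, Continuous fun z => qF p z n := by
  intro n
  induction n using Nat.strong_induction_on with
  | _ n ih =>
    match n with
    | 0 =>
      simp only [qF]
      exact (continuous_id.sub continuous_const).div_const _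
    | 1 =>
      have h0 := ih 0 (by omega)
      simp only [qF]
      exact (continuous_const.mul ((h0.pow 2))).sub continuous_const
    | (m+2) =>
      have h1 := ih (m+1) (by omega)
      have h0 := ih m (by omega)
      simp only [qF]
      exact ((continuous_const.mul h1).mul h0).sub continuous_const

lemma qF_differentiable (p : ℕ → ℝ) : ∀ n, Differentiable ℂ fun z => qF p z n := by
  intro n
  induction n using Nat.strong_induction_on with
  | _ n ih =>
    match n with
    | 0 =>
      simp only [qF]
      exact (differentiable_id.sub_const _).div_const _
    | 1 =>
      have h0 := ih 0 (by omega)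
      simp only [qF]
      exact ((h0.pow 2).const_mul _).sub_const _
    | (m+2) =>
      have h1 := ih (m+1) (by omega)
      have h0 := ih m (by omega)
      simp only [qF]
      exact (((h1.const_mul _).mul h0)).sub_const _

lemma norm_aux_lower (r : ℝ) (h0 : 0 < r) (h1 : r ≤ 1) (w : ℂ) :
    ‖w‖/r - (1/r - 1) ≤ ‖1/(r:ℂ) * w - (1/(r:ℂ) - 1)‖ := by
  have hc : (1/(r:ℂ) - 1) = ((1/r - 1 : ℝ) : ℂ) := by push_cast; ring
  have hnc : ‖(1/(r:ℂ) - 1)‖ = 1/r - 1 := by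
    rw [hc, Complex.norm_real, Real.norm_of_nonneg]
    rw [le_sub_iff_add_le, zero_add, le_div_iff₀ h0, one_mul]; exact h1
  have hnm : ‖1/(r:ℂ) * w‖ = ‖w‖/r := by
    rw [norm_mul, norm_div, norm_one, Complex.norm_real, Real.norm_of_nonneg h0.le]
    ring
  calc ‖w‖/r - (1/r - 1) = ‖1/(r:ℂ) * w‖ - ‖(1/(r:ℂ) - 1)‖ := by rw [hnm, hnc]
    _ ≤ ‖1/(r:ℂ) * w - (1/(r:ℂ) - 1)‖ := norm_sub_norm_le _ _

lemma norm_aux_upper (r : ℝ) (h0 : 0 < r) (h1 : r ≤ 1) (w : ℂ) :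
    ‖1/(r:ℂ) * w - (1/(r:ℂ) - 1)‖ ≤ ‖w‖/r + (1/r - 1) := by
  have hc : (1/(r:ℂ) - 1) = ((1/r - 1 : ℝ) : ℂ) := by push_cast; ring
  have hnc : ‖(1/(r:ℂ) - 1)‖ = 1/r - 1 := by
    rw [hc, Complex.norm_real, Real.norm_of_nonneg]
    rw [le_sub_iff_add_le, zero_add, le_div_iff₀ h0, one_mul]; exact h1
  have hnm : ‖1/(r:ℂ) * w‖ = ‖w‖/r := by
    rw [norm_mul, norm_div, norm_one, Complex.norm_real, Real.norm_of_nonneg h0.le]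
    ring
  calc ‖1/(r:ℂ) * w - (1/(r:ℂ) - 1)‖ ≤ ‖1/(r:ℂ) * w‖ + ‖(1/(r:ℂ) - 1)‖ := norm_sub_le _ _
    _ = ‖w‖/r + (1/r - 1) := by rw [hnm, hnc]

section Est
variable (p : ℕ → ℝ) (δ : ℝ)

lemma rr_pos (hp : ∀ i, 1 ≤ i → 0 < p i ∧ p i ≤ 1) (n : ℕ) : 0 < rr p n ∧ rr p n ≤ 1 :=
  hp _ (by omega)

lemma lower2 (hp : ∀ i, 1 ≤ i → 0 < p i ∧ p i ≤ 1) (z : ℂ) (n : ℕ)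
    (h : 1 ≤ ‖qF p z (n+1)‖ * ‖qF p z n‖) :
    ‖qF p z (n+1)‖ * ‖qF p z n‖ ≤ ‖qF p z (n+2)‖ := by
  obtain ⟨hr0, hr1⟩ := rr_pos p hp (n+2)
  have key := norm_aux_lower (rr p (n+2)) hr0 hr1 (qF p z (n+1) * qF p z n)
  rw [norm_mul] at key
  have hq : qF p z (n+2) = 1/(rr p (n+2):ℂ) * (qF p z (n+1) * qF p z n)
      - (1/(rr p (n+2):ℂ) - 1) := by
    simp only [qF]; ring
  rw [← hq] at key
  have h1r : 1 ≤ 1/rr p (n+2) := by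
    rw [le_div_iff₀ hr0, one_mul]; exact hr1
  set X := ‖qF p z (n+1)‖ * ‖qF p z n‖
  have : X ≤ X/(rr p (n+2)) - (1/(rr p (n+2)) - 1) := by
    rw [div_eq_mul_one_div X]
    nlinarith [mul_nonneg (sub_nonneg.2 h1r) (sub_nonneg.2 h)]
  linarith

lemma upper2 (hp : ∀ i, 1 ≤ i → 0 < p i ∧ p i ≤ 1) (hδ : 0 < δ)
    (hpδ : ∀ i, 1 ≤ i → δ < p i) (z : ℂ) (n : ℕ) :
    ‖qF p z (n+2)‖ ≤ (‖qF p z (n+1)‖ * ‖qF p z n‖ + 1)/δ := by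
  obtain ⟨hr0, hr1⟩ := rr_pos p hp (n+2)
  have hrδ : δ < rr p (n+2) := hpδ _ (by omega)
  have key := norm_aux_upper (rr p (n+2)) hr0 hr1 (qF p z (n+1) * qF p z n)
  rw [norm_mul] at key
  have hq : qF p z (n+2) = 1/(rr p (n+2):ℂ) * (qF p z (n+1) * qF p z n)
      - (1/(rr p (n+2):ℂ) - 1) := by
    simp only [qF]; ring
  rw [← hq] at key
  set X := ‖qF p z (n+1)‖ * ‖qF p z n‖ with hX
  have hXnn : 0 ≤ X := mul_nonneg (norm_nonneg _) (norm_nonneg _)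
  have h2 : 1/rr p (n+2) ≤ 1/δ := one_div_le_one_div_of_le hδ hrδ.le
  have h3 : X/rr p (n+2) ≤ X/δ := div_le_div_of_nonneg_left hXnn hδ hrδ.le
  have h4 : (X + 1)/δ = X/δ + 1/δ := by ring
  rw [h4]
  linarith

end Est

section Est2
variable (p : ℕ → ℝ) (δ : ℝ)

lemma lower1 (hp : ∀ i, 1 ≤ i → 0 < p i ∧ p i ≤ 1) (z : ℂ)
    (h : 1 ≤ ‖qF p z 0‖) : ‖qF p z 0‖^2 ≤ ‖qF p z 1‖ := by
  obtain ⟨hr0, hr1⟩ := hp 2 (by omega)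
  have key := norm_aux_lower (p 2) hr0 hr1 ((qF p z 0)^2)
  rw [norm_pow] at key
  have hq : qF p z 1 = 1/(p 2:ℂ) * (qF p z 0)^2 - (1/(p 2:ℂ) - 1) := by
    simp only [qF]
  rw [← hq] at key
  have h1r : 1 ≤ 1/p 2 := by rw [le_div_iff₀ hr0, one_mul]; exact hr1
  have hsq : 1 ≤ ‖qF p z 0‖^2 := one_le_pow₀ h
  set X := ‖qF p z 0‖^2
  have : X ≤ X/(p 2) - (1/(p 2) - 1) := by
    rw [div_eq_mul_one_div X]
    nlinarith [mul_nonneg (sub_nonneg.2 h1r) (sub_nonneg.2 hsq)]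
  linarith

lemma upper1 (hp : ∀ i, 1 ≤ i → 0 < p i ∧ p i ≤ 1) (hδ : 0 < δ)
    (hpδ : ∀ i, 1 ≤ i → δ < p i) (z : ℂ) :
    ‖qF p z 1‖ ≤ (‖qF p z 0‖^2 + 1)/δ := by
  obtain ⟨hr0, hr1⟩ := hp 2 (by omega)
  have hrδ : δ < p 2 := hpδ 2 (by omega)
  have key := norm_aux_upper (p 2) hr0 hr1 ((qF p z 0)^2)
  rw [norm_pow] at key
  have hq : qF p z 1 = 1/(p 2:ℂ) * (qF p z 0)^2 - (1/(p 2:ℂ) - 1) := by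
    simp only [qF]
  rw [← hq] at key
  set X := ‖qF p z 0‖^2 with hX
  have hXnn : 0 ≤ X := by positivity
  have h2 : 1/p 2 ≤ 1/δ := one_div_le_one_div_of_le hδ hrδ.le
  have h3 : X/p 2 ≤ X/δ := div_le_div_of_nonneg_left hXnn hδ hrδ.le
  have h4 : (X + 1)/δ = X/δ + 1/δ := by ring
  rw [h4]
  linarith

lemma lower0 (hp : ∀ i, 1 ≤ i → 0 < p i ∧ p i ≤ 1) (z : ℂ) :
    ‖z‖ - 1 ≤ ‖qF p z 0‖ := by
  obtain ⟨hr0, hr1⟩ := hp 1 (by omega)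
  have hc : (1 - (p 1:ℂ)) = ((1 - p 1 : ℝ) : ℂ) := by push_cast; ring
  have hnc : ‖(1 - (p 1:ℂ))‖ = 1 - p 1 := by
    rw [hc, Complex.norm_real, Real.norm_of_nonneg (by linarith)]
  have hnum : ‖z‖ - 1 ≤ ‖z - (1 - (p 1:ℂ))‖ := by
    have := norm_sub_norm_le z (1 - (p 1:ℂ))
    rw [hnc] at this
    linarith
  have hq : ‖qF p z 0‖ = ‖z - (1 - (p 1:ℂ))‖ / p 1 := by
    simp only [qF]
    rw [norm_div, Complex.norm_real, Real.norm_of_nonneg hr0.le]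
  rw [hq]
  calc ‖z‖ - 1 ≤ ‖z - (1 - (p 1:ℂ))‖ := hnum
    _ ≤ ‖z - (1 - (p 1:ℂ))‖ / p 1 := by
        rw [le_div_iff₀ hr0]
        exact mul_le_of_le_one_right (norm_nonneg _) hr1

lemma upper0 (hp : ∀ i, 1 ≤ i → 0 < p i ∧ p i ≤ 1) (hδ : 0 < δ)
    (hpδ : ∀ i, 1 ≤ i → δ < p i) (z : ℂ) :
    ‖qF p z 0‖ ≤ (‖z‖ + 1)/δ := by
  obtain ⟨hr0, hr1⟩ := hp 1 (by omega)
  have hrδ : δ < p 1 := hpδ 1 (by omega)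
  have hc : (1 - (p 1:ℂ)) = ((1 - p 1 : ℝ) : ℂ) := by push_cast; ring
  have hnc : ‖(1 - (p 1:ℂ))‖ = 1 - p 1 := by
    rw [hc, Complex.norm_real, Real.norm_of_nonneg (by linarith)]
  have hnum : ‖z - (1 - (p 1:ℂ))‖ ≤ ‖z‖ + 1 := by
    have := norm_sub_le z (1 - (p 1:ℂ))
    rw [hnc] at this
    linarith
  have hq : ‖qF p z 0‖ = ‖z - (1 - (p 1:ℂ))‖ / p 1 := by
    simp only [qF]
    rw [norm_div, Complex.norm_real, Real.norm_of_nonneg hr0.le]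
  rw [hq]
  calc ‖z - (1 - (p 1:ℂ))‖ / p 1 ≤ (‖z‖ + 1) / p 1 := by
        rw [div_le_div_iff_of_pos_right hr0]; exact hnum
    _ ≤ (‖z‖ + 1)/δ := by
        apply div_le_div_of_nonneg_left (by positivity) hδ hrδ.le

end Est2

def Sset (p : ℕ → ℝ) : Set ℂ := {z : ℂ | ∀ n, ‖qF p z n‖ ≤ 4 ∨ ‖qF p z (n+1)‖ ≤ 4}

lemma escape (p : ℕ → ℝ) (hp : ∀ i, 1 ≤ i → 0 < p i ∧ p i ≤ 1) (z : ℂ) (n : ℕ)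
    (h0 : 4 ≤ ‖qF p z n‖) (h1 : 4 ≤ ‖qF p z (n+1)‖) : z ∉ Eset p := by
  have key : ∀ k, 2 * 2^k ≤ ‖qF p z (n+k)‖ := by
    intro k
    induction k using Nat.strong_induction_on with
    | _ k ih =>
      match k with
      | 0 => simpa using le_trans (by norm_num) h0
      | 1 => simpa using le_trans (by norm_num) h1
      | (j+2) =>
        have ih1 := ih (j+1) (by omega)
        have ih0 := ih j (by omega)
        have e1 : n + (j+1) = (n+j)+1 := by ring
        have e2 : n + (j+2) = (n+j)+2 := by ring
        rw [e1] at ih1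
        rw [e2]
        have hj : (1:ℝ) ≤ 2^j := one_le_pow₀ (by norm_num)
        have hnn : (0:ℝ) ≤ 2 * 2^j := by positivity
        have hmul : 2 * 2^(j+1) * (2 * 2^j) ≤ ‖qF p z ((n+j)+1)‖ * ‖qF p z (n+j)‖ := by
          apply mul_le_mul ih1 ih0 hnn (le_trans (by positivity) ih1)
        have hps : (2:ℝ)^(j+1) = 2^j*2 := pow_succ 2 j
        have hj2 : (1:ℝ) ≤ 2^j*2^j := by nlinarith
        have hone : (1:ℝ) ≤ ‖qF p z ((n+j)+1)‖ * ‖qF p z (n+j)‖ := by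
          rw [hps] at hmul
          nlinarith
        have := lower2 p hp z (n+j) hone
        have hpow : (2:ℝ) * 2^(j+2) ≤ 2 * 2^(j+1) * (2 * 2^j) := by
          rw [pow_succ, pow_succ]
          nlinarith
        exact le_trans hpow (le_trans hmul this)
  rintro ⟨C, hC⟩
  obtain ⟨k, hk⟩ := pow_unbounded_of_one_lt C (by norm_num : (1:ℝ) < 2)
  have h2 := key k
  have h3 := hC (n+k)
  have : (0:ℝ) < 2^k := by positivity
  linarith

lemma E_subset_S (p : ℕ → ℝ) (hp : ∀ i, 1 ≤ i → 0 < p i ∧ p i ≤ 1) :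
    Eset p ⊆ Sset p := by
  intro z hz n
  by_contra hcon
  push_neg at hcon
  exact escape p hp z n hcon.1.le hcon.2.le hz

lemma S_bound (p : ℕ → ℝ) (δ : ℝ) (hp : ∀ i, 1 ≤ i → 0 < p i ∧ p i ≤ 1)
    (hδ : 0 < δ) (hpδ : ∀ i, 1 ≤ i → δ < p i) (z : ℂ) (hz : z ∈ Sset p) :
    ∀ n, ‖qF p z n‖ ≤ max (max ‖qF p z 0‖ ‖qF p z 1‖) (17/δ) := by
  have hδ1 : δ < 1 := lt_of_lt_of_le (hpδ 1 le_rfl) (hp 1 le_rfl).2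
  intro n
  induction n using Nat.strong_induction_on with
  | _ n ih =>
    match n with
    | 0 => exact le_max_of_le_left (le_max_left _ _)
    | 1 => exact le_max_of_le_left (le_max_right _ _)
    | (m+2) =>
      by_cases hK : ‖qF p z (m+2)‖ ≤ 17/δ
      · exact le_trans hK (le_max_right _ _)
      push_neg at hK
      have hKval : (4:ℝ) < 17/δ := by
        rw [lt_div_iff₀ hδ]; nlinarith
      have h4 : (4:ℝ) < ‖qF p z (m+2)‖ := lt_trans hKval hK
      have h1 : ‖qF p z (m+1)‖ ≤ 4 := (hz (m+1)).resolve_right (by linarith)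
      have h3 : ‖qF p z (m+3)‖ ≤ 4 := (hz (m+2)).resolve_left (by linarith)
      have hprod : ‖qF p z (m+2)‖ * ‖qF p z (m+1)‖ ≤ 4 := by
        by_cases hge : 1 ≤ ‖qF p z ((m+1)+1)‖ * ‖qF p z (m+1)‖
        · have := lower2 p hp z (m+1) hge
          calc ‖qF p z (m+2)‖ * ‖qF p z (m+1)‖ ≤ ‖qF p z ((m+1)+2)‖ := this
            _ ≤ 4 := h3
        · push_neg at hge
          linarith
      have hup := upper2 p δ hp hδ hpδ z m
      have hkey : 4 * ‖qF p z (m+2)‖ ≤ ‖qF p z m‖ := by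
        set A0 := ‖qF p z m‖ with hA0
        set A1 := ‖qF p z (m+1)‖ with hA1
        set A2 := ‖qF p z (m+2)‖ with hA2
        have h0n : (0:ℝ) ≤ A0 := norm_nonneg _
        have h1n : (0:ℝ) ≤ A1 := norm_nonneg _
        have h2n : (0:ℝ) ≤ A2 := norm_nonneg _
        have hδA2 : 17 < δ * A2 := by
          rw [div_lt_iff₀ hδ] at hK; linarith
        have hup' : δ * A2 ≤ A1*A0 + 1 := by
          rw [le_div_iff₀ hδ] at hup; linarith
        nlinarith [mul_le_mul_of_nonneg_right hup' h2n,
          mul_le_mul_of_nonneg_right hprod h0n,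
          mul_le_mul_of_nonneg_right hδA2.le h2n]
      have ihm := ih m (by omega)
      have hCnn : (0:ℝ) ≤ max (max ‖qF p z 0‖ ‖qF p z 1‖) (17/δ) :=
        le_trans (norm_nonneg _) (le_max_of_le_left (le_max_left _ _))
      linarith

lemma S_subset_E (p : ℕ → ℝ) (δ : ℝ) (hp : ∀ i, 1 ≤ i → 0 < p i ∧ p i ≤ 1)
    (hδ : 0 < δ) (hpδ : ∀ i, 1 ≤ i → δ < p i) : Sset p ⊆ Eset p := by
  intro z hz
  exact ⟨_, S_bound p δ hp hδ hpδ z hz⟩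

lemma S_closed (p : ℕ → ℝ) : IsClosed (Sset p) := by
  have : Sset p = ⋂ n, ({z : ℂ | ‖qF p z n‖ ≤ 4} ∪ {z : ℂ | ‖qF p z (n+1)‖ ≤ 4}) := by
    ext z
    simp only [Sset, mem_setOf_eq, mem_iInter, mem_union]
  rw [this]
  exact isClosed_iInter fun n => IsClosed.union
    (isClosed_le (qF_continuous p n).norm continuous_const)
    (isClosed_le (qF_continuous p (n+1)).norm continuous_const)

lemma S_bounded (p : ℕ → ℝ) (hp : ∀ i, 1 ≤ i → 0 < p i ∧ p i ≤ 1) :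
    Sset p ⊆ Metric.closedBall (0:ℂ) 6 := by
  intro z hz
  rw [mem_closedBall_zero_iff]
  by_contra h
  push_neg at h
  have h0 : 5 ≤ ‖qF p z 0‖ := le_trans (by linarith) (lower0 p hp z)
  have h1 : 25 ≤ ‖qF p z 1‖ := by
    have := lower1 p hp z (by linarith)
    nlinarith
  rcases hz 0 with hc | hc <;> linarith

lemma exterior_connected : IsConnected {z : ℂ | 6 < ‖z‖} := by
  have hrank : 1 < Module.rank ℝ ℂ := by
    rw [Complex.rank_real_complex]; norm_num
  have hs : IsConnected (Metric.sphere (0:ℂ) 1) := isConnected_sphere hrank 0 zero_le_one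
  have hI : IsConnected (Ioi (6:ℝ)) := isConnected_Ioi
  have hprod : IsConnected ((Ioi (6:ℝ)) ×ˢ (Metric.sphere (0:ℂ) 1)) := hI.prod hs
  have hmap : Continuous (fun q : ℝ × ℂ => (q.1 : ℂ) * q.2) :=
    (Complex.continuous_ofReal.comp continuous_fst).mul continuous_snd
  have himg := hprod.image _ hmap.continuousOn
  have heq : (fun q : ℝ × ℂ => (q.1 : ℂ) * q.2) '' ((Ioi (6:ℝ)) ×ˢ (Metric.sphere (0:ℂ) 1))
      = {z : ℂ | 6 < ‖z‖} := by
    ext z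
    simp only [mem_image, mem_setOf_eq, mem_prod, mem_Ioi, mem_sphere_iff_norm, sub_zero,
      Prod.exists]
    constructor
    · rintro ⟨t, v, ⟨ht, hv⟩, rfl⟩
      rw [norm_mul, Complex.norm_real, hv, mul_one, Real.norm_of_nonneg (by linarith)]
      exact ht
    · intro hz
      have hz0 : z ≠ 0 := by
        intro h; rw [h] at hz; simp at hz; linarith
      refine ⟨‖z‖, (‖z‖:ℂ)⁻¹ * z, ⟨hz, ?_⟩, ?_⟩
      · rw [norm_mul, norm_inv, Complex.norm_real, Real.norm_of_nonneg (norm_nonneg z)]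
        field_simp
      · rw [← mul_assoc, mul_inv_cancel₀, one_mul]
        simpa using hz0
  rw [← heq]
  exact himg

lemma E_uniform (p : ℕ → ℝ) (δ : ℝ) (hp : ∀ i, 1 ≤ i → 0 < p i ∧ p i ≤ 1)
    (hδ : 0 < δ) (hpδ : ∀ i, 1 ≤ i → δ < p i) (z : ℂ) (hz : z ∈ Eset p) (n : ℕ) :
    ‖qF p z n‖ ≤ max (max (7/δ) (((7/δ)^2 + 1)/δ)) (17/δ) := by
  have hzS : z ∈ Sset p := E_subset_S p hp hz
  have hz6 : ‖z‖ ≤ 6 := mem_closedBall_zero_iff.1 (S_bounded p hp hzS)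
  have h0 : ‖qF p z 0‖ ≤ 7/δ := by
    have := upper0 p δ hp hδ hpδ z
    have h7 : (‖z‖ + 1)/δ ≤ 7/δ :=
      div_le_div_of_nonneg_right (by linarith) hδ.le
    linarith
  have h1 : ‖qF p z 1‖ ≤ ((7/δ)^2 + 1)/δ := by
    have hu := upper1 p δ hp hδ hpδ z
    have hsq : ‖qF p z 0‖^2 ≤ (7/δ)^2 := by
      apply pow_le_pow_left₀ (norm_nonneg _) h0
    have : (‖qF p z 0‖^2 + 1)/δ ≤ ((7/δ)^2 + 1)/δ :=
      div_le_div_of_nonneg_right (by linarith) hδ.le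
    linarith
  have := S_bound p δ hp hδ hpδ z hzS n
  have hm : max (max ‖qF p z 0‖ ‖qF p z 1‖) (17/δ)
      ≤ max (max (7/δ) (((7/δ)^2 + 1)/δ)) (17/δ) := by
    apply max_le_max (max_le_max h0 h1) le_rfl
  linarith

/-- Suppose `p i > δ > 0` for all `i ≥ 1`.  Then `E` is compact and
`ℂ \ E` is connected. -/
theorem stmt15 (p : ℕ → ℝ) (hp : ∀ i, 1 ≤ i → 0 < p i ∧ p i ≤ 1)
    (δ : ℝ) (hδ : 0 < δ) (hpδ : ∀ i, 1 ≤ i → δ < p i) :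
    IsCompact (Eset p) ∧ IsConnected (Eset p)ᶜ := by
  have hES : Eset p = Sset p :=
    subset_antisymm (E_subset_S p hp) (S_subset_E p δ hp hδ hpδ)
  have hcl : IsClosed (Eset p) := hES ▸ S_closed p
  have hbd : Eset p ⊆ Metric.closedBall (0:ℂ) 6 := hES ▸ S_bounded p hp
  have hcompact : IsCompact (Eset p) :=
    Metric.isCompact_of_isClosed_isBounded hcl ((Metric.isBounded_closedBall).subset hbd)
  refine ⟨hcompact, ?_⟩
  set W : Set ℂ := {z : ℂ | 6 < ‖z‖} with hW
  have hWconn : IsConnected W := exterior_connected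
  have hWE : W ⊆ (Eset p)ᶜ := by
    intro z hz hzE
    have := mem_closedBall_zero_iff.1 (hbd hzE)
    simp only [hW, mem_setOf_eq] at hz
    linarith
  have hopen : IsOpen (Eset p)ᶜ := hcl.isOpen_compl
  -- every connected component of the complement reaches outside the ball of radius 6
  have key : ∀ y ∈ (Eset p)ᶜ, ∃ w, w ∈ connectedComponentIn (Eset p)ᶜ y ∧ 6 < ‖w‖ := by
    intro y hy
    by_contra hcon
    push_neg at hcon
    set U := connectedComponentIn (Eset p)ᶜ y with hU
    have hUopen : IsOpen U := hopen.connectedComponentIn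
    have hUy : y ∈ U := mem_connectedComponentIn hy
    have hUsub : U ⊆ (Eset p)ᶜ := connectedComponentIn_subset _ _
    have hUbd : IsBounded U := by
      apply (Metric.isBounded_closedBall (x := (0:ℂ)) (r := 6)).subset
      intro w hw
      exact mem_closedBall_zero_iff.2 (hcon w hw)
    have hfr : frontier U ⊆ Eset p := by
      intro w hw
      by_contra hwE
      have hwU : w ∉ U := by
        rw [hUopen.frontier_eq] at hw; exact hw.2
      have hwcl : w ∈ closure U := frontier_subset_closure hw
      have hwE' : w ∈ (Eset p)ᶜ := hwE
      have hV : IsOpen (connectedComponentIn (Eset p)ᶜ w) := hopen.connectedComponentIn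
      have hwV : w ∈ connectedComponentIn (Eset p)ᶜ w := mem_connectedComponentIn hwE'
      obtain ⟨v, hvV, hvU⟩ := mem_closure_iff.1 hwcl _ hV hwV
      have hVU : IsPreconnected (connectedComponentIn (Eset p)ᶜ w ∪ U) :=
        IsPreconnected.union v hvV hvU isPreconnected_connectedComponentIn
          isPreconnected_connectedComponentIn
      have hsub2 : connectedComponentIn (Eset p)ᶜ w ∪ U ⊆ U :=
        hVU.subset_connectedComponentIn (Or.inr hUy)
          (union_subset (connectedComponentIn_subset _ _) hUsub)
      exact hwU (hsub2 (Or.inl hwV))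
    have hyE : y ∈ Eset p := by
      refine ⟨max (max (7/δ) (((7/δ)^2 + 1)/δ)) (17/δ), fun n => ?_⟩
      exact Complex.norm_le_of_forall_mem_frontier_norm_le hUbd
        ((qF_differentiable p n).diffContOnCl)
        (fun w hw => E_uniform p δ hp hδ hpδ w (hfr hw) n) (subset_closure hUy)
    exact hy hyE
  have hx0 : (7:ℂ) ∈ W := by
    simp only [hW, mem_setOf_eq]
    norm_num
  refine ⟨⟨7, hWE hx0⟩, ?_⟩
  apply isPreconnected_of_forall (7:ℂ)
  intro y hy
  obtain ⟨w, hwU, hw6⟩ := key y hy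
  refine ⟨connectedComponentIn (Eset p)ᶜ y ∪ W,
    union_subset (connectedComponentIn_subset _ _) hWE,
    Or.inr hx0, Or.inl (mem_connectedComponentIn hy), ?_⟩
  exact IsPreconnected.union w hwU hw6 isPreconnected_connectedComponentIn
    hWconn.isPreconnected
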